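/- (Dynamic Sasvi dominates Gap Safe Moon) For Lasso-like problems with g positively homogeneous, define u^DS(θ; β̃) = -f*(-θ) if g(β̃) - θᵀXβ̃ ≥ 0 else -∞, and u^GM(θ; β̃) = -f*(-θ) if -f*(-θ) ≤ P(β̃) else -∞, where P(β̃) = (1/2)‖y - Xβ̃‖₂² + g(β̃) and f*(-θ) = (1/2)‖θ‖₂² - yᵀθ. Then u^DS(θ; β̃) ≤ u^GM(θ; β̃) for all β̃ ∈ ℝ^d and θ ∈ ℝ^n. -/
import Mathlib


open Matrix

/-- Dynamic Sasvi upper bound dominates the Gap Safe Moon upper bound: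
`u^DS(θ; β̃) ≤ u^GM(θ; β̃)`. -/
theorem uDS_le_uGM {n d : ℕ}
    (g : (Fin d → ℝ) → ℝ) (X : Matrix (Fin n) (Fin d) ℝ) (y : Fin n → ℝ)
    (hpos : ∀ (k : ℝ), 0 ≤ k → ∀ β : Fin d → ℝ, g (k • β) = k * g β)
    (βt : Fin d → ℝ) (θ : Fin n → ℝ) :
    (if θ ⬝ᵥ (X *ᵥ βt) ≤ g βt
      then ((y ⬝ᵥ θ - 1 / 2 * (θ ⬝ᵥ θ) : ℝ) : EReal) else (⊥ : EReal)) ≤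
    (if y ⬝ᵥ θ - 1 / 2 * (θ ⬝ᵥ θ) ≤ 1 / 2 * ((y - X *ᵥ βt) ⬝ᵥ (y - X *ᵥ βt)) + g βt
      then ((y ⬝ᵥ θ - 1 / 2 * (θ ⬝ᵥ θ) : ℝ) : EReal) else (⊥ : EReal)) := by
  set z := X *ᵥ βt with hz
  by_cases h1 : θ ⬝ᵥ z ≤ g βt
  · have key : y ⬝ᵥ θ - 1 / 2 * (θ ⬝ᵥ θ) ≤ 1 / 2 * ((y - z) ⬝ᵥ (y - z)) + g βt := by
      have h0 : 0 ≤ (y - z - θ) ⬝ᵥ (y - z - θ) := Finset.sum_nonneg fun i _ => mul_self_nonneg _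
      simp only [sub_dotProduct, dotProduct_sub] at h0 ⊢
      have c1 : y ⬝ᵥ θ = θ ⬝ᵥ y := dotProduct_comm _ _
      have c2 : z ⬝ᵥ θ = θ ⬝ᵥ z := dotProduct_comm _ _
      have c3 : y ⬝ᵥ z = z ⬝ᵥ y := dotProduct_comm _ _
      nlinarith
    rw [if_pos h1, if_pos key]
  · simp [h1]
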